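/- Let X_1,…,X_n be independent Bernoulli random variables with parameter p ∈ (0,1], let S_n = Σ_{i=1}^n X_i, p̂ = S_n/n, and Z = 1{S_n > 0}/p̂ − 1/p (with 1{S_n>0}/p̂ = 0 when S_n = 0). Then for every n ≥ 1 and every p, E[Z] ≤ 4/p. -/

import Mathlib

open MeasureTheory ENNReal

noncomputable section

namespace BernoulliInvMoment

/-- The Bernoulli(p) distribution on `Bool`: `true` with probability `p`,
`false` with probability `1 − p`. -/
def bern (p : ℝ) : Measure Bool :=
  (Real.toNNReal p) • Measure.dirac true + (Real.toNNReal (1 - p)) • Measure.dirac false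

instance bern_finite (p : ℝ) : IsFiniteMeasure (bern p) := by
  unfold bern; infer_instance

/-- The distribution of `n` independent Bernoulli(p) random variables. -/
def bernData (n : ℕ) (p : ℝ) : Measure (Fin n → Bool) :=
  Measure.pi fun _ => bern p

/-- `S_n`: the number of successes. -/
def bcount (n : ℕ) (d : Fin n → Bool) : ℕ :=
  (Finset.univ.filter fun i => d i = true).card

lemma bern_singleton (p : ℝ) (b : Bool) :
    bern p {b} = if b then ENNReal.ofReal p else ENNReal.ofReal (1 - p) := by
  unfold bern
  cases b <;> simp only [Measure.add_apply, Measure.smul_apply, Measure.dirac_apply' _ (MeasurableSet.singleton _), ENNReal.smul_def, smul_eq_mul, ENNReal.ofReal] <;> simp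

lemma bernData_singleton (n : ℕ) (p : ℝ) (d : Fin n → Bool) :
    bernData n p {d} = (ENNReal.ofReal p) ^ (bcount n d) *
      (ENNReal.ofReal (1 - p)) ^ (n - bcount n d) := by
  unfold bernData
  rw [← Set.univ_pi_singleton d, Measure.pi_pi]
  rw [← Finset.prod_filter_mul_prod_filter_not Finset.univ (fun i => d i = true)]
  have h1 : ∀ i ∈ Finset.univ.filter (fun i => d i = true), bern p {d i} = ENNReal.ofReal p := by
    intro i hi; simp only [Finset.mem_filter] at hi; rw [bern_singleton, hi.2]; simp
  have h2 : ∀ i ∈ Finset.univ.filter (fun i => ¬ d i = true), bern p {d i} = ENNReal.ofReal (1-p) := by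
    intro i hi; simp only [Finset.mem_filter, Bool.not_eq_true] at hi; rw [bern_singleton, hi.2]; simp
  rw [Finset.prod_congr rfl h1, Finset.prod_congr rfl h2, Finset.prod_const, Finset.prod_const]
  congr 2
  have := Finset.card_filter_add_card_filter_not (s := (Finset.univ : Finset (Fin n))) (p := fun i => d i = true)
  simp only [Finset.card_univ, Fintype.card_fin] at this
  unfold bcount
  omega

lemma card_bcount (n k : ℕ) :
    ((Finset.univ : Finset (Fin n → Bool)).filter fun d => bcount n d = k).card
      = n.choose k := by
  have h : (Finset.powersetCard k (Finset.univ : Finset (Fin n))).card = n.choose k := by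
    simp [Finset.card_powersetCard]
  rw [← h]
  refine Finset.card_bij' (fun d _ => Finset.univ.filter (fun i => d i = true))
    (fun s _ => fun i => decide (i ∈ s)) ?_ ?_ ?_ ?_
  · intro d hd
    simp only [Finset.mem_filter, Finset.mem_univ, true_and] at hd
    simp only [Finset.mem_powersetCard]
    exact ⟨Finset.subset_univ _, hd⟩
  · intro s hs
    simp only [Finset.mem_powersetCard] at hs
    rw [Finset.mem_filter]
    refine ⟨Finset.mem_univ _, ?_⟩
    unfold bcount
    rw [← hs.2]
    congr 1
    ext i
    simp
  · intro d hd
    funext i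
    simp
  · intro s hs
    ext i
    simp


lemma bcount_le (n : ℕ) (d : Fin n → Bool) : bcount n d ≤ n := by
  unfold bcount
  calc (Finset.univ.filter fun i => d i = true).card ≤ (Finset.univ : Finset (Fin n)).card :=
        Finset.card_filter_le _ _
    _ = n := by simp

/-- Lemma 1, first part: with `S_n = Σ X_i`, `p̂ = S_n/n` and
`Z = 1{S_n>0}/p̂ − 1/p` (so `1{S_n>0}/p̂ = n/S_n`, interpreted as `0` when `S_n = 0`),
one has `E[Z] ≤ 4/p` for every `n ≥ 1` and `p ∈ (0,1]`. -/
theorem expectation_Z_le_four_div_p (n : ℕ) (hn : 1 ≤ n)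
    (p : ℝ) (hp : 0 < p) (hp1 : p ≤ 1) :
    (∫ d, ((if 0 < bcount n d then (n : ℝ) / (bcount n d : ℝ) else 0) - 1 / p)
        ∂(bernData n p)) ≤ 4 / p := by
  have hq : (0:ℝ) ≤ 1 - p := by linarith
  set q : ℝ := 1 - p with hqdef
  have hprob : IsProbabilityMeasure (bern p) := by
    constructor
    unfold bern
    simp only [Measure.add_apply, Measure.smul_apply, Measure.dirac_apply' _ MeasurableSet.univ,
      Set.indicator_univ, Pi.one_apply, smul_eq_mul, mul_one, ENNReal.smul_def]
    show ENNReal.ofReal p + ENNReal.ofReal (1 - p) = 1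
    rw [← ENNReal.ofReal_add hp.le hq, show p + (1 - p) = (1:ℝ) by ring, ENNReal.ofReal_one]
  haveI : IsProbabilityMeasure (bernData n p) := by
    unfold bernData; infer_instance
  have hint : Integrable (fun d : Fin n → Bool =>
      (if 0 < bcount n d then (n : ℝ) / (bcount n d : ℝ) else 0)) (bernData n p) :=
    .of_finite
  rw [integral_sub hint (integrable_const _), integral_const, probReal_univ]
  simp only [ENNReal.toReal_one, one_smul]
  -- reduce to bounding the main integral by 2/p
  have hmain : (∫ d, (if 0 < bcount n d then (n : ℝ) / (bcount n d : ℝ) else 0)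
      ∂(bernData n p)) ≤ 2 / p := by
    rw [integral_fintype hint]
    simp only [Measure.real]
    -- rewrite each term
    have hterm : ∀ d : Fin n → Bool,
        ((bernData n p) {d}).toReal • (if 0 < bcount n d then (n : ℝ) / (bcount n d : ℝ) else 0)
        = (fun k => (p ^ k * q ^ (n - k)) * (if 0 < k then (n : ℝ) / k else 0)) (bcount n d) := by
      intro d
      rw [bernData_singleton]
      simp only [smul_eq_mul]
      congr 1
      rw [ENNReal.toReal_mul, ← ENNReal.ofReal_pow hp.le, ← ENNReal.ofReal_pow hq,
        ENNReal.toReal_ofReal (by positivity), ENNReal.toReal_ofReal (by positivity)]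
    rw [Finset.sum_congr rfl fun d _ => hterm d]
    rw [← Finset.sum_fiberwise_of_maps_to (g := bcount n)
      (t := Finset.range (n+1)) (fun d _ => Finset.mem_range.2 (Nat.lt_succ_of_le (bcount_le n d)))]
    have hinner : ∀ k ∈ Finset.range (n+1),
        (∑ d ∈ Finset.univ.filter fun d : Fin n → Bool => bcount n d = k,
          (p ^ (bcount n d) * q ^ (n - bcount n d)) * (if 0 < bcount n d then (n : ℝ) / (bcount n d) else 0))
        = (n.choose k : ℝ) * ((p ^ k * q ^ (n - k)) * (if 0 < k then (n : ℝ) / k else 0)) := by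
      intro k _
      rw [Finset.sum_congr rfl (fun d hd => by
        simp only [Finset.mem_filter] at hd
        rw [hd.2])]
      rw [Finset.sum_const, card_bcount, nsmul_eq_mul]
    rw [Finset.sum_congr rfl hinner]
    -- termwise bound
    have hbound : ∀ k ∈ Finset.range (n+1),
        (n.choose k : ℝ) * ((p ^ k * q ^ (n - k)) * (if 0 < k then (n : ℝ) / k else 0))
        ≤ (2 / p) * (((n+1).choose (k+1) : ℝ) * (p ^ (k+1) * q ^ (n - k))) := by
      intro k hk
      rcases Nat.eq_zero_or_pos k with rfl | hkpos
      · norm_num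
        positivity
      · rw [if_pos hkpos]
        have hC : ((n+1 : ℕ) : ℝ) * (n.choose k : ℝ) = ((n+1).choose (k+1) : ℝ) * ((k:ℝ)+1) := by
          exact_mod_cast congrArg (Nat.cast : ℕ → ℝ) (Nat.add_one_mul_choose_eq n k)
        have hkR : (0:ℝ) < k := by exact_mod_cast hkpos
        have hrw : (2 / p) * (((n+1).choose (k+1) : ℝ) * (p ^ (k+1) * q ^ (n - k)))
            = (n.choose k : ℝ) * (p ^ k * q ^ (n - k)) * (2 * ((n:ℝ)+1) / ((k:ℝ)+1)) := by
          rw [pow_succ]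
          field_simp
          push_cast at hC ⊢
          linear_combination (-(1 - p)^(n-k)) * hC
        rw [hrw, show (n.choose k : ℝ) * ((p ^ k * q ^ (n - k)) * ((n:ℝ)/k))
            = (n.choose k : ℝ) * (p ^ k * q ^ (n - k)) * ((n:ℝ)/k) from by ring]
        apply mul_le_mul_of_nonneg_left _ (by positivity)
        rw [div_le_div_iff₀ hkR (by positivity)]
        have hkn : (k:ℝ) ≥ 1 := by exact_mod_cast hkpos
        have hkn' : (k:ℝ) ≤ (n:ℝ) := by
          exact_mod_cast Nat.lt_succ_iff.1 (Finset.mem_range.1 hk)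
        nlinarith
    calc _ ≤ ∑ k ∈ Finset.range (n+1),
          (2 / p) * (((n+1).choose (k+1) : ℝ) * (p ^ (k+1) * q ^ (n - k))) :=
        Finset.sum_le_sum hbound
      _ = (2/p) * ∑ k ∈ Finset.range (n+1), (((n+1).choose (k+1) : ℝ) * (p ^ (k+1) * q ^ (n - k))) := by
        rw [Finset.mul_sum]
      _ ≤ (2/p) * 1 := by
        apply mul_le_mul_of_nonneg_left _ (by positivity)
        have hbin : ∑ j ∈ Finset.range (n+2), p ^ j * q ^ (n + 1 - j) * ((n+1).choose j : ℝ)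
            = 1 := by
          rw [← add_pow]
          simp [hqdef]
        have hsplit := Finset.sum_range_succ' (fun j => p ^ j * q ^ (n + 1 - j) * ((n+1).choose j : ℝ)) (n+1)
        have hre : ∑ k ∈ Finset.range (n+1), (((n+1).choose (k+1) : ℝ) * (p ^ (k+1) * q ^ (n - k)))
            = ∑ k ∈ Finset.range (n+1), p ^ (k+1) * q ^ (n + 1 - (k+1)) * ((n+1).choose (k+1) : ℝ) := by
          apply Finset.sum_congr rfl
          intro k hk
          have : n + 1 - (k+1) = n - k := by omega
          rw [this]; ring
        rw [hre]
        have h0 : (0:ℝ) ≤ p ^ 0 * q ^ (n + 1 - 0) * ((n+1).choose 0 : ℝ) := by positivity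
        rw [hbin] at hsplit
        linarith
      _ = 2 / p := mul_one _
  have h14 : (1:ℝ)/p ≤ 4/p := by
    gcongr
    norm_num
  have h2 : (2:ℝ)/p = 1/p + 1/p := by ring
  linarith


end BernoulliInvMoment
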